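/- Let Π be a p×p orthogonal projection matrix of rank d < p and U a p×(p−d) matrix whose columns form an orthonormal basis of the kernel of Π. Then a p×p symmetric matrix H belongs to the deflated Fantope D_Π if and only if H = UGUᵀ for some (p−d)×(p−d) symmetric matrix G with 0 ⪯ G ⪯ I and tr(G) = 1. In particular, every H ∈ D_Π satisfies ΠH = HΠ = 0. -/

import Mathlib

open Matrix Finset

noncomputable def frobInner {p : ℕ} (A B : Matrix (Fin p) (Fin p) ℝ) : ℝ := (Aᵀ * B).trace

def fantope1 {p : ℕ} : Set (Matrix (Fin p) (Fin p) ℝ) :=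
  {H | H.PosSemidef ∧ ((1 : Matrix (Fin p) (Fin p) ℝ) - H).PosSemidef ∧ H.trace = 1}

def deflatedFantope {p : ℕ} (P : Matrix (Fin p) (Fin p) ℝ) : Set (Matrix (Fin p) (Fin p) ℝ) :=
  {H | H ∈ fantope1 ∧ frobInner H P = 0}

/-- conjTranspose = transpose over ℝ -/
lemma aux_ctt {m n : ℕ} (A : Matrix (Fin m) (Fin n) ℝ) : Aᴴ = Aᵀ := by
  ext i j; simp [conjTranspose_apply]

lemma aux_herm {n : ℕ} {A : Matrix (Fin n) (Fin n) ℝ} (h : Aᵀ = A) : A.IsHermitian := by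
  unfold Matrix.IsHermitian; rw [aux_ctt, h]

/-- quadratic form congruence -/
lemma aux_quad {m n : ℕ} (U : Matrix (Fin m) (Fin n) ℝ) (G : Matrix (Fin n) (Fin n) ℝ)
    (x : Fin m → ℝ) :
    x ⬝ᵥ (U * G * Uᵀ).mulVec x = (Uᵀ.mulVec x) ⬝ᵥ G.mulVec (Uᵀ.mulVec x) := by
  rw [← mulVec_mulVec, ← mulVec_mulVec, dotProduct_mulVec, ← mulVec_transpose]

/-- trace of AᵀA zero forces A = 0 -/
lemma aux_tr_zero {m n : ℕ} (A : Matrix (Fin m) (Fin n) ℝ) (h : (Aᵀ * A).trace = 0) :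
    A = 0 := by
  ext i j
  have h2 : ∀ k l, A k l ^ 2 = 0 := by
    have hmain := Finset.sum_eq_zero_iff_of_nonneg (s := Finset.univ)
      (f := fun j => ∑ i, A i j ^ 2) ?_ |>.mp ?_
    · intro k l
      have := Finset.sum_eq_zero_iff_of_nonneg (s := Finset.univ)
        (f := fun i => A i l ^ 2) (fun i _ => sq_nonneg _) |>.mp (hmain l (Finset.mem_univ _))
      exact this k (Finset.mem_univ _)
    · intro j _; positivity
    · rw [← h]; simp [Matrix.trace, Matrix.mul_apply, Matrix.diag, sq]
  have := h2 i j
  simpa [pow_eq_zero_iff] using this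

lemma aux_psd_of_symm_idem {n : ℕ} {Q : Matrix (Fin n) (Fin n) ℝ}
    (h1 : Qᵀ = Q) (h2 : Q * Q = Q) : Q.PosSemidef := by
  have hQ : Q = Qᴴ * Q := by rw [aux_ctt, h1, h2]
  rw [hQ]; exact posSemidef_conjTranspose_mul_self Q

lemma aux_psd_mul {n : ℕ} {A B : Matrix (Fin n) (Fin n) ℝ}
    (hA : A.PosSemidef) (hB : B.PosSemidef) (h : (A * B).trace = 0) : A * B = 0 := by
  have hfac : ∀ {C : Matrix (Fin n) (Fin n) ℝ}, C.PosSemidef →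
      ∃ B : Matrix (Fin n) (Fin n) ℝ, C = Bᴴ * B := by
    intro C hC
    open scoped MatrixOrder in
    obtain ⟨B, hB⟩ := CStarAlgebra.nonneg_iff_eq_star_mul_self.mp hC.nonneg
    exact ⟨B, by rw [hB, star_eq_conjTranspose]⟩
  obtain ⟨L, hL⟩ := hfac hA
  obtain ⟨M, hM⟩ := hfac hB
  rw [aux_ctt] at hL
  rw [aux_ctt] at hM
  have key : L * Mᵀ = 0 := by
    apply aux_tr_zero
    rw [← h, hL, hM]
    have : (L * Mᵀ)ᵀ * (L * Mᵀ) = M * (Lᵀ * L * Mᵀ) := by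
      rw [transpose_mul, transpose_transpose]; noncomm_ring
    rw [this, trace_mul_comm, Matrix.mul_assoc]
  calc A * B = Lᵀ * (L * Mᵀ) * M := by rw [hL, hM]; noncomm_ring
    _ = 0 := by rw [key, Matrix.mul_zero, Matrix.zero_mul]

lemma aux_trace_rank {p : ℕ} (P : Matrix (Fin p) (Fin p) ℝ) (hPproj : P * P = P) :
    P.trace = (P.rank : ℝ) := by
  have hproj : LinearMap.IsProj (LinearMap.range P.mulVecLin) P.mulVecLin :=
    ⟨fun x => LinearMap.mem_range_self _ x, by
      rintro x ⟨y, rfl⟩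
      simp only [mulVecLin_apply, mulVec_mulVec, hPproj]⟩
  have h := hproj.trace
  rw [LinearMap.trace_eq_matrix_trace ℝ (Pi.basisFun ℝ (Fin p)),
    LinearMap.toMatrix_eq_toMatrix', ← Matrix.toLin'_apply', LinearMap.toMatrix'_toLin'] at h
  rw [h]; rfl

/-- Let Π be a p×p orthogonal projection of rank d < p and U a p×(p−d) matrix
whose columns form an orthonormal basis of ker Π.  Then H ∈ D_Π iff H = UGUᵀ for some
symmetric G with 0 ⪯ G ⪯ I and tr G = 1; in particular every H ∈ D_Π satisfies
ΠH = HΠ = 0. -/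
theorem stmt10 {p d : ℕ} (hd : d < p)
    (P : Matrix (Fin p) (Fin p) ℝ) (hPsymm : P.IsSymm) (hPproj : P * P = P)
    (hrank : P.rank = d)
    (U : Matrix (Fin p) (Fin (p - d)) ℝ) (hUorth : Uᵀ * U = 1) (hUker : P * U = 0) :
    (∀ H : Matrix (Fin p) (Fin p) ℝ,
      H ∈ deflatedFantope P ↔
        ∃ G : Matrix (Fin (p - d)) (Fin (p - d)) ℝ,
          G.PosSemidef ∧ ((1 : Matrix (Fin (p - d)) (Fin (p - d)) ℝ) - G).PosSemidef ∧
          G.trace = 1 ∧ H = U * G * Uᵀ) ∧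
    (∀ H ∈ deflatedFantope P, P * H = 0 ∧ H * P = 0) := by
  have hPsd : P.PosSemidef := aux_psd_of_symm_idem hPsymm hPproj
  have hUtP : Uᵀ * P = 0 := by
    have := congrArg transpose hUker
    simpa [transpose_mul, hPsymm.eq] using this
  -- U * Uᵀ = 1 - P
  have hUUt : U * Uᵀ = 1 - P := by
    set Q := 1 - P - U * Uᵀ with hQdef
    have h1 : P * (U * Uᵀ) = 0 := by rw [← Matrix.mul_assoc, hUker, Matrix.zero_mul]
    have h2 : (U * Uᵀ) * P = 0 := by rw [Matrix.mul_assoc, hUtP, Matrix.mul_zero]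
    have h3 : (U * Uᵀ) * (U * Uᵀ) = U * Uᵀ := by
      rw [Matrix.mul_assoc, ← Matrix.mul_assoc Uᵀ, hUorth, Matrix.one_mul]
    have hQsymm : Qᵀ = Q := by
      simp [hQdef, transpose_sub, hPsymm.eq, transpose_mul]
    have hQidem : Q * Q = Q := by
      have : Q * Q = 1 - P - U * Uᵀ - (P - P * P - P * (U * Uᵀ))
          - ((U * Uᵀ) - (U * Uᵀ) * P - (U * Uᵀ) * (U * Uᵀ)) := by
        rw [hQdef]; noncomm_ring
      rw [this, hPproj, h1, h2, h3, hQdef]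
      abel
    have hQtr : Q.trace = 0 := by
      have htrP : P.trace = (d : ℝ) := by rw [aux_trace_rank P hPproj, hrank]
      have htrU : (U * Uᵀ).trace = ((p - d : ℕ) : ℝ) := by
        rw [trace_mul_comm, hUorth, trace_one]
        simp
      have hcast : ((p - d : ℕ) : ℝ) = (p : ℝ) - (d : ℝ) := by
        rw [Nat.cast_sub hd.le]
      rw [hQdef, trace_sub, trace_sub, trace_one, htrP, htrU, hcast]
      simp
    have hQ0 : Q = 0 := by
      apply aux_tr_zero
      rw [hQsymm, hQidem, hQtr]
    exact (sub_eq_zero.mp hQ0).symm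
  -- key: every H in the deflated Fantope is annihilated by P
  have key : ∀ H ∈ deflatedFantope P, P * H = 0 ∧ H * P = 0 := by
    intro H hH
    obtain ⟨⟨hHpsd, hH1, hHtr⟩, hHP⟩ := hH
    have hHsymm : Hᵀ = H := by rw [← aux_ctt]; exact hHpsd.isHermitian
    have hHP0 : H * P = 0 := by
      apply aux_psd_mul hHpsd hPsd
      unfold frobInner at hHP
      rwa [hHsymm] at hHP
    have hPH0 : P * H = 0 := by
      have := congrArg transpose hHP0
      simpa [transpose_mul, hHsymm, hPsymm.eq] using this
    exact ⟨hPH0, hHP0⟩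
  refine ⟨fun H => ⟨fun hH => ?_, fun ⟨G, hGpsd, hG1, hGtr, hHG⟩ => ?_⟩, key⟩
  · -- forward direction
    obtain ⟨hPH0, hHP0⟩ := key H hH
    obtain ⟨⟨hHpsd, hH1, hHtr⟩, hHP⟩ := hH
    have hHsymm : Hᵀ = H := by rw [← aux_ctt]; exact hHpsd.isHermitian
    refine ⟨Uᵀ * H * U, ?_, ?_, ?_, ?_⟩
    · -- G psd
      have := hHpsd.conjTranspose_mul_mul_same U
      rwa [aux_ctt] at this
    · -- 1 - G psd
      have hGsymm : (Uᵀ * H * U)ᵀ = Uᵀ * H * U := by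
        rw [transpose_mul, transpose_mul, transpose_transpose, hHsymm, Matrix.mul_assoc]
      refine .of_dotProduct_mulVec_nonneg (aux_herm (by rw [transpose_sub, transpose_one, hGsymm])) fun y => ?_
      have hstar : star y = y := star_trivial y
      rw [hstar]
      have hq : y ⬝ᵥ (Uᵀ * H * U).mulVec y = (U.mulVec y) ⬝ᵥ H.mulVec (U.mulVec y) := by
        have := aux_quad Uᵀ H y
        rwa [transpose_transpose] at this
      have hq1 : y ⬝ᵥ y = (U.mulVec y) ⬝ᵥ (U.mulVec y) := by
        have := aux_quad Uᵀ 1 y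
        rw [transpose_transpose, Matrix.mul_one, hUorth, one_mulVec, one_mulVec] at this
        exact this
      have h1H := hH1.dotProduct_mulVec_nonneg (U.mulVec y)
      rw [star_trivial, sub_mulVec, dotProduct_sub, one_mulVec] at h1H
      rw [sub_mulVec, dotProduct_sub, one_mulVec, hq, hq1]
      exact h1H
    · -- trace
      rw [trace_mul_cycle, hUUt]
      have : (1 - P) * H = H := by rw [sub_mul, Matrix.one_mul, hPH0, sub_zero]
      rw [this, hHtr]
    · -- H = U G Uᵀ
      have e1 : U * (Uᵀ * H * U) * Uᵀ = (U * Uᵀ) * H * (U * Uᵀ) := by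
        simp only [Matrix.mul_assoc]
      rw [e1, hUUt, sub_mul, Matrix.one_mul, hPH0, sub_zero, mul_sub, Matrix.mul_one,
        hHP0, sub_zero]
  · -- backward direction
    subst hHG
    have hGsymm : Gᵀ = G := by rw [← aux_ctt]; exact hGpsd.isHermitian
    refine ⟨⟨?_, ?_, ?_⟩, ?_⟩
    · have := hGpsd.mul_mul_conjTranspose_same U
      rwa [aux_ctt] at this
    · -- 1 - UGUᵀ psd
      have hsymm : (U * G * Uᵀ)ᵀ = U * G * Uᵀ := by
        rw [transpose_mul, transpose_mul, transpose_transpose, hGsymm, Matrix.mul_assoc]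
      refine .of_dotProduct_mulVec_nonneg (aux_herm (by rw [transpose_sub, transpose_one, hsymm])) fun x => ?_
      rw [star_trivial, sub_mulVec, dotProduct_sub, one_mulVec]
      have hq : x ⬝ᵥ (U * G * Uᵀ).mulVec x
          = (Uᵀ.mulVec x) ⬝ᵥ G.mulVec (Uᵀ.mulVec x) := aux_quad U G x
      have step1 : (Uᵀ.mulVec x) ⬝ᵥ G.mulVec (Uᵀ.mulVec x)
          ≤ (Uᵀ.mulVec x) ⬝ᵥ (Uᵀ.mulVec x) := by
        have := hG1.dotProduct_mulVec_nonneg (Uᵀ.mulVec x)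
        rw [star_trivial, sub_mulVec, dotProduct_sub, one_mulVec] at this
        linarith
      have step2 : (Uᵀ.mulVec x) ⬝ᵥ (Uᵀ.mulVec x) ≤ x ⬝ᵥ x := by
        have hPq := hPsd.dotProduct_mulVec_nonneg x
        rw [star_trivial] at hPq
        have hP1 : P = 1 - U * Uᵀ := by rw [hUUt]; abel
        rw [hP1, sub_mulVec, dotProduct_sub, one_mulVec] at hPq
        have := aux_quad U 1 x
        rw [Matrix.mul_one, one_mulVec] at this
        linarith
      rw [hq]
      linarith
    · rw [trace_mul_cycle, hUorth, Matrix.one_mul, hGtr]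
    · unfold frobInner
      have : (U * G * Uᵀ)ᵀ * P = U * Gᵀ * (Uᵀ * P) := by
        rw [transpose_mul, transpose_mul, transpose_transpose]
        simp only [Matrix.mul_assoc]
      rw [this, hUtP, Matrix.mul_zero, trace_zero]
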